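/- Let ⟨S,R⟩ be a set of terms with restricted regular constraints, R = ⟨A,V,C,W,h⟩, where A = ⟨Q,Σ,δ⟩ is a 1-or-(|S|+1) DTA and h ≥ |Q| + height(s). Let s ∈ T_Σ(V−W) be a term determined at all non-variable positions of the terms in S and structurally subsumed by all terms in S with respect to R. If ⟨{s},R⟩ has an instance not in L(⟨S,R⟩), and a variable x occurs at least twice in s with L(A,C(x)) infinite, then s has infinitely many instances not in L(⟨S,R⟩), all of them pairwise different on x (i.e., there are solutions φ_1, φ_2, … of R with each φ_i(s) ∉ L(⟨S,R⟩) and φ_i(x) ≠ φ_j(x) for i ≠ j). -/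

import Mathlib

namespace RITRC

/-- Terms over a signature (symbols `F` with arities `ar`) with variables in `V`. -/
inductive Term (F : Type) (ar : F → ℕ) (V : Type) : Type where
  | var : V → Term F ar V
  | app : (f : F) → (Fin (ar f) → Term F ar V) → Term F ar V

/-- Ground terms (terms without variables). -/
abbrev GTerm (F : Type) (ar : F → ℕ) : Type := Term F ar Empty

variable {F V V' Q : Type} {ar : F → ℕ}

/-- Applying a substitution to a term. -/
def Term.subst (φ : V → Term F ar V') : Term F ar V → Term F ar V'
  | .var x => φ x
  | .app f ts => .app f (fun i => (ts i).subst φ)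

/-- The height of a term. -/
def Term.height : Term F ar V → ℕ
  | .var _ => 0
  | .app _ ts => Finset.univ.sup (fun i => (ts i).height + 1)

/-- The size of a term. -/
def Term.size : Term F ar V → ℕ
  | .var _ => 1
  | .app _ ts => 1 + ∑ i, (ts i).size

/-- The subterm of a term at a position (a list of child indices), if it exists. -/
def Term.sub : Term F ar V → List ℕ → Option (Term F ar V)
  | t, [] => some t
  | .var _, _ :: _ => none
  | .app f ts, i :: p => if h : i < ar f then (ts ⟨i, h⟩).sub p else none

/-- The root symbol of a term: a function symbol or a variable. -/
def Term.rootSym : Term F ar V → F ⊕ V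
  | .var x => .inr x
  | .app f _ => .inl f

/-- `p` is a position of `t`. -/
def Term.isPos (t : Term F ar V) (p : List ℕ) : Prop := t.sub p ≠ none

/-- `p` is a variable position of `t`. -/
def Term.isVarPos (t : Term F ar V) (p : List ℕ) : Prop :=
  ∃ x, t.sub p = some (Term.var x)

/-- `p` is a non-variable position of `t`. -/
def Term.isNonVarPos (t : Term F ar V) (p : List ℕ) : Prop :=
  ∃ f ts, t.sub p = some (Term.app f ts)

/-- The variable `x` occurs in `t`. -/
def Term.varOccurs (t : Term F ar V) (x : V) : Prop :=
  ∃ p, t.sub p = some (Term.var x)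

/-- The variable `x` occurs at least twice in `t`. -/
def Term.occursTwice (t : Term F ar V) (x : V) : Prop :=
  ∃ p q, p ≠ q ∧ t.sub p = some (Term.var x) ∧ t.sub q = some (Term.var x)

/-- `t` is determined at position `p`: either `p` is a non-variable position
of `t`, or some prefix of `p` is labeled by a constant symbol. -/
def Term.determinedAt (t : Term F ar V) (p : List ℕ) : Prop :=
  t.isNonVarPos p ∨ ∃ p', p' <+: p ∧ ∃ f ts, t.sub p' = some (Term.app f ts) ∧ ar f = 0

/-- A deterministic tree automaton: at most one transition `f(q₁,…,qₖ) → q`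
for every `f` and states `q₁,…,qₖ`. -/
structure DTA (F : Type) (ar : F → ℕ) (Q : Type) : Type where
  δ : (f : F) → (Fin (ar f) → Q) → Option Q

/-- Collect a family of optional values into an optional family. -/
def allSome {n : ℕ} {α : Type} (g : Fin n → Option α) : Option (Fin n → α) :=
  if h : ∀ i, (g i).isSome then some (fun i => (g i).get (h i)) else none

/-- The state reached by `A` on a term, where variables are pre-assigned states by `C`. -/
def DTA.runC (A : DTA F ar Q) (C : V → Q) : Term F ar V → Option Q
  | .var x => some (C x)
  | .app f ts => (allSome (fun i => A.runC C (ts i))).bind (A.δ f)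

/-- The state reached by `A` on a ground term. -/
def DTA.run (A : DTA F ar Q) : GTerm F ar → Option Q :=
  A.runC (fun x => x.elim)

/-- `L(A,q)`: the set of ground terms on which `A` reaches state `q`. -/
def DTA.lang (A : DTA F ar Q) (q : Q) : Set (GTerm F ar) :=
  {t | A.run t = some q}

/-- `A` is complete. -/
def DTA.Complete (A : DTA F ar Q) : Prop :=
  ∀ (f : F) (qs : Fin (ar f) → Q), (A.δ f qs).isSome

/-- `A` is a 1-or-n DTA: each state has exactly one, or at least `n`, terms. -/
def DTA.OneOr (A : DTA F ar Q) (n : ℕ) : Prop :=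
  ∀ q : Q, (A.lang q).encard = 1 ∨ (n : ℕ∞) ≤ (A.lang q).encard

/-- The number of transitions of a DTA. -/
noncomputable def DTA.numTrans [Fintype F] [Fintype Q] (A : DTA F ar Q) : ℕ :=
  ∑ f : F, ∑ qs : Fin (ar f) → Q, if (A.δ f qs).isSome then 1 else 0

/-- A set of ground terms is regular if it is recognized by some (finite) DTA. -/
def IsRegular (L : Set (GTerm F ar)) : Prop :=
  ∃ (Q : Type) (_ : Fintype Q) (A : DTA F ar Q) (Facc : Set Q),
    L = {t | ∃ q ∈ Facc, A.run t = some q}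

/-- A DTA bundled with its (finite) state type and accepting states. -/
structure NDTA (F : Type) (ar : F → ℕ) : Type 1 where
  Q : Type
  fin : Fintype Q
  A : DTA F ar Q
  acc : Set Q

/-- The language recognized by a bundled DTA. -/
def NDTA.lang (N : NDTA F ar) : Set (GTerm F ar) :=
  {t | ∃ q ∈ N.acc, N.A.run t = some q}

/-- The size of a bundled DTA: number of states plus sum of sizes of transitions. -/
noncomputable def NDTA.size [Fintype F] (N : NDTA F ar) : ℕ :=
  letI := N.fin
  Fintype.card N.Q +
    ∑ f : F, ∑ qs : Fin (ar f) → N.Q, if (N.A.δ f qs).isSome then ar f + 2 else 0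

/-- `L(⟨S,M⟩)`: the language of a set of terms `S` with regular constraints `M`. -/
def langM (S : Set (Term F ar V)) (M : V → NDTA F ar) : Set (GTerm F ar) :=
  {t | ∃ s ∈ S, ∃ φ : V → GTerm F ar, (∀ x, φ x ∈ (M x).lang) ∧ t = s.subst φ}

/-- `L(⟨S,R⟩)` for a single regular constraint `R = ⟨A,C⟩`. -/
def langSingle (S : Set (Term F ar V)) (A : DTA F ar Q) (C : V → Q) :
    Set (GTerm F ar) :=
  {t | ∃ s ∈ S, ∃ φ : V → GTerm F ar, (∀ x, A.run (φ x) = some (C x)) ∧ t = s.subst φ}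

/-- A restricted regular constraint `R = ⟨A,V,C,W,h⟩`. -/
structure RRC (F : Type) (ar : F → ℕ) (V Q : Type) : Type where
  A : DTA F ar Q
  C : V → Q
  W : Set V
  hgt : ℕ

/-- A solution of a restricted regular constraint. -/
def RRC.IsSolution (R : RRC F ar V Q) (φ : V → GTerm F ar) : Prop :=
  (∀ x, R.A.run (φ x) = some (R.C x)) ∧ ∀ x ∈ R.W, (φ x).height ≤ R.hgt

/-- `L(⟨S,R⟩)` for a restricted regular constraint `R`. -/
def RRC.lang (R : RRC F ar V Q) (S : Set (Term F ar V)) : Set (GTerm F ar) :=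
  {t | ∃ s ∈ S, ∃ φ, R.IsSolution φ ∧ t = s.subst φ}

/-- Renaming the variables of a term. -/
def Term.rename (ρ : V → V') (t : Term F ar V) : Term F ar V' :=
  t.subst (fun x => Term.var (ρ x))

/-- `s` and `t` are structurally similar: `t` is obtained from `s` by an
injective variable renaming. -/
def StructSim (s : Term F ar V) (t : Term F ar V') : Prop :=
  ∃ ρ : V → V', Function.Injective ρ ∧ t = s.rename ρ

/-- `s` and `t` are structurally equal with respect to the state assignment `C`. -/
def StructEq (C : V → Q) (s t : Term F ar V) : Prop :=
  StructSim s t ∧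
    ∀ p x y, s.sub p = some (Term.var x) → t.sub p = some (Term.var y) → C x = C y

/-- `s` is structurally subsumed by `t` (with respect to `A` and `C`). -/
def StructSub (A : DTA F ar Q) (C : V → Q) (s t : Term F ar V) : Prop :=
  (∀ p f ts, t.sub p = some (Term.app f ts) →
    ∃ sp, s.sub p = some sp ∧ sp.rootSym = Sum.inl f) ∧
  (∀ p tp, t.sub p = some tp → ∃ sp, s.sub p = some sp ∧ A.runC C tp = A.runC C sp)

/-- Building a binary term `f(t,u)` from a symbol of arity 2. -/
def mkBin {f : F} (h : ar f = 2) (t u : Term F ar V) : Term F ar V :=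
  Term.app f (fun i => if (i : ℕ) = 0 then t else u)

/-- `s` satisfies the infinite-instances property in `⟨S,R⟩`. -/
def InfiniteInstances (R : RRC F ar V Q) (S : Set (Term F ar V)) (s : Term F ar V) :
    Prop :=
  ∃ x, s.occursTwice x ∧
    ∃ φ : ℕ → (V → GTerm F ar),
      (∀ i, R.IsSolution (φ i)) ∧
      (∀ i, s.subst (φ i) ∉ R.lang (S \ {s})) ∧
      (∀ i j, i ≠ j → φ i x ≠ φ j x)

/-- The set of prefixes of a finite set of positions. -/
def prefixes (P : Finset (List ℕ)) : Finset (List ℕ) :=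
  P.biUnion (fun p => p.inits.toFinset)


section AuxLemmas

variable {F V V' V'' Q : Type} {ar : F → ℕ}

lemma sub_cons (f : F) (ts : Fin (ar f) → Term F ar V) (i : Fin (ar f)) (p : List ℕ) :
    (Term.app f ts).sub (i.val :: p) = (ts i).sub p := by
  simp [Term.sub, i.isLt]

lemma subst_sub (φ : V → Term F ar V') :
    ∀ (p : List ℕ) (t u : Term F ar V), t.sub p = some u →
      (t.subst φ).sub p = some (u.subst φ) := by
  intro p
  induction p with
  | nil =>
    intro t u h
    simp [Term.sub] at h ⊢
    exact congrArg _ h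
  | cons i p ih =>
    intro t u h
    cases t with
    | var y => simp [Term.sub] at h
    | app f ts =>
      simp only [Term.sub] at h
      split at h
      · next hi =>
        simpa [Term.subst, Term.sub, hi] using ih _ _ h
      · exact absurd h (by simp)

lemma sub_size_le : ∀ (p : List ℕ) (t u : Term F ar V), t.sub p = some u → u.size ≤ t.size := by
  intro p
  induction p with
  | nil => intro t u h; simp [Term.sub] at h; simp [h]
  | cons i p ih =>
    intro t u h
    cases t with
    | var y => simp [Term.sub] at h
    | app f ts =>
      simp only [Term.sub] at h
      split at h
      · next hi =>
        have h1 := ih _ _ h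
        have h2 : (ts ⟨i, hi⟩).size ≤ ∑ j, (ts j).size :=
          Finset.single_le_sum (f := fun j => (ts j).size) (fun _ _ => Nat.zero_le _)
            (Finset.mem_univ _)
        simp only [Term.size]; omega
      · exact absurd h (by simp)

lemma sub_height_le : ∀ (p : List ℕ) (t u : Term F ar V), t.sub p = some u →
    u.height ≤ t.height := by
  intro p
  induction p with
  | nil => intro t u h; simp [Term.sub] at h; simp [h]
  | cons i p ih =>
    intro t u h
    cases t with
    | var y => simp [Term.sub] at h
    | app f ts =>
      simp only [Term.sub] at h
      split at h
      · next hi =>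
        have h1 := ih _ _ h
        have h2 : (ts ⟨i, hi⟩).height + 1 ≤ (Term.app f ts).height :=
          Finset.le_sup (f := fun j => (ts j).height + 1) (Finset.mem_univ _)
        simp only [Term.height] at h2 ⊢; omega
      · exact absurd h (by simp)

lemma subst_congr {φ φ' : V → Term F ar V'} :
    ∀ t : Term F ar V, (∀ y, t.varOccurs y → φ y = φ' y) → t.subst φ = t.subst φ' := by
  intro t
  induction t with
  | var y => intro h; exact h y ⟨[], rfl⟩
  | app f ts ih =>
    intro h
    simp only [Term.subst]
    congr 1
    funext i
    refine ih i (fun y ⟨p, hp⟩ => h y ⟨i.val :: p, ?_⟩)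
    rw [sub_cons]; exact hp

lemma subst_subst (σ : V → Term F ar V') (φ : V' → Term F ar V'') :
    ∀ t : Term F ar V, (t.subst σ).subst φ = t.subst (fun y => (σ y).subst φ) := by
  intro t
  induction t with
  | var y => rfl
  | app f ts ih =>
    simp only [Term.subst]
    congr 1
    funext i
    exact ih i

lemma run_subst (A : DTA F ar Q) (C : V → Q) (φ : V → GTerm F ar)
    (hφ : ∀ y, A.run (φ y) = some (C y)) :
    ∀ t : Term F ar V, A.run (t.subst φ) = A.runC C t := by
  intro t
  induction t with
  | var y => exact hφ y
  | app f ts ih =>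
    show A.runC _ _ = _
    simp only [Term.subst, DTA.runC]
    congr 1
    exact congrArg allSome (funext fun i => ih i)

lemma size_lt_of_occurs (f : F) (vs : Fin (ar f) → Term F ar V) (x : V)
    (φ : V → Term F ar V') (h : (Term.app f vs).varOccurs x) :
    (φ x).size < ((Term.app f vs).subst φ).size := by
  obtain ⟨p, hp⟩ := h
  cases p with
  | nil => simp [Term.sub] at hp
  | cons i p =>
    simp only [Term.sub] at hp
    split at hp
    · next hi =>
      have h1 := subst_sub φ p _ _ hp
      have h2 := sub_size_le p _ _ h1
      have h3 : ((vs ⟨i, hi⟩).subst φ).size ≤ ∑ j, ((vs j).subst φ).size :=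
        Finset.single_le_sum (f := fun j => ((vs j).subst φ).size) (fun _ _ => Nat.zero_le _)
          (Finset.mem_univ _)
      have h2' : (Term.var x).subst φ = φ x := rfl
      rw [h2'] at h2
      simp only [Term.subst, Term.size] at h3 ⊢
      omega
    · exact absurd hp (by simp)

lemma eq_of_occurs_subst {σ : V → GTerm F ar} [DecidableEq V] {x : V} {t₁ t₂ : GTerm F ar}
    {v : Term F ar V} (hocc : v.varOccurs x)
    (h : v.subst (Function.update σ x t₁) = v.subst (Function.update σ x t₂)) : t₁ = t₂ := by
  obtain ⟨p, hp⟩ := hocc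
  have h1 := subst_sub (Function.update σ x t₁) p v _ hp
  have h2 := subst_sub (Function.update σ x t₂) p v _ hp
  rw [h] at h1
  rw [h1] at h2
  simpa [Term.subst] using h2

lemma not_occurs_subst {σ : V → GTerm F ar} [DecidableEq V] {x : V} (a b : GTerm F ar)
    {v : Term F ar V} (hocc : ¬ v.varOccurs x) :
    v.subst (Function.update σ x a) = v.subst (Function.update σ x b) := by
  refine subst_congr v (fun y hy => ?_)
  have hyx : y ≠ x := fun h => hocc (h ▸ hy)
  simp [Function.update_of_ne hyx]

lemma two_point_aux [DecidableEq V] {σ : V → GTerm F ar} {x : V} {t₁ t₂ : GTerm F ar}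
    (hne : t₁ ≠ t₂) (y : V) (v : Term F ar V)
    (h1 : Function.update σ x t₁ y = v.subst (Function.update σ x t₁))
    (h2 : Function.update σ x t₂ y = v.subst (Function.update σ x t₂)) :
    ∀ t, Function.update σ x t y = v.subst (Function.update σ x t) := by
  intro t
  by_cases hyx : y = x
  · rw [hyx] at h1 h2 ⊢
    rw [Function.update_self] at h1 h2 ⊢
    cases v with
    | var z =>
      by_cases hzx : z = x
      · show _ = Function.update σ x t z
        rw [hzx, Function.update_self]
      · exfalso
        have e1 : Function.update σ x t₁ z = σ z := Function.update_of_ne hzx _ _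
        have e2 : Function.update σ x t₂ z = σ z := Function.update_of_ne hzx _ _
        exact hne ((h1.trans e1).trans (h2.trans e2).symm)
    | app f vs =>
      exfalso
      by_cases hocc : (Term.app f vs).varOccurs x
      · have hs := size_lt_of_occurs f vs x (Function.update σ x t₁) hocc
        rw [← h1, Function.update_self] at hs
        exact lt_irrefl _ hs
      · exact hne ((h1.trans (not_occurs_subst (σ := σ) t₁ t₂ hocc)).trans h2.symm)
  · rw [Function.update_of_ne hyx] at h1 h2 ⊢
    cases v with
    | var z =>
      by_cases hzx : z = x
      · exfalso
        have e1 : Term.subst (Function.update σ x t₁) (Term.var z) = t₁ := by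
          rw [hzx]; exact Function.update_self _ _ _
        have e2 : Term.subst (Function.update σ x t₂) (Term.var z) = t₂ := by
          rw [hzx]; exact Function.update_self _ _ _
        exact hne ((e1.symm.trans h1.symm).trans (h2.trans e2))
      · show _ = Function.update σ x t z
        rw [Function.update_of_ne hzx]
        exact h1.trans (Function.update_of_ne hzx _ _)
    | app f vs =>
      by_cases hocc : (Term.app f vs).varOccurs x
      · exact absurd (eq_of_occurs_subst hocc (h1.symm.trans h2)) hne
      · rw [← not_occurs_subst (σ := σ) t₁ t hocc]
        exact h1

lemma two_point [DecidableEq V] {σ : V → GTerm F ar} {x : V} {t₁ t₂ : GTerm F ar}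
    (hne : t₁ ≠ t₂) :
    ∀ u v : Term F ar V,
      u.subst (Function.update σ x t₁) = v.subst (Function.update σ x t₁) →
      u.subst (Function.update σ x t₂) = v.subst (Function.update σ x t₂) →
      ∀ t, u.subst (Function.update σ x t) = v.subst (Function.update σ x t) := by
  intro u
  induction u with
  | var y => exact fun v h1 h2 t => two_point_aux hne y v h1 h2 t
  | app f us ih =>
    intro v h1 h2 t
    cases v with
    | var z => exact (two_point_aux hne z (Term.app f us) h1.symm h2.symm t).symm
    | app g vs =>
      simp only [Term.subst] at h1 h2 ⊢
      injection h1 with hf h1'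
      subst hf
      injection h2 with _ h2'
      congr 1
      funext i
      exact ih i (vs i) (congrFun (eq_of_heq h1') i) (congrFun h2' i) t

lemma finite_height_lt [Fintype F] : ∀ n : ℕ, {t : GTerm F ar | t.height < n}.Finite := by
  intro n
  induction n with
  | zero => exact Set.finite_empty.subset (fun t ht => absurd ht (Nat.not_lt_zero _))
  | succ n ih =>
    haveI : Finite {t : GTerm F ar // t.height < n} := ih.to_subtype
    have hsub : {t : GTerm F ar | t.height < n + 1} ⊆
        Set.range (fun d : (Σ f : F, Fin (ar f) → {t : GTerm F ar // t.height < n}) =>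
          Term.app d.1 (fun i => (d.2 i).1)) := by
      intro t ht
      cases t with
      | var e => exact e.elim
      | app f ts =>
        have hc : ∀ i, (ts i).height < n := by
          intro i
          have hle := Finset.le_sup (f := fun j => (ts j).height + 1) (Finset.mem_univ i)
          simp only [Set.mem_setOf_eq, Term.height] at ht
          try dsimp only at hle
          omega
        exact ⟨⟨f, fun i => ⟨ts i, hc i⟩⟩, rfl⟩
    exact (Set.finite_range _).subset hsub

lemma exists_height_gt [Fintype F] {s : Set (GTerm F ar)} (hs : s.Infinite) (h : ℕ) :
    ∃ t ∈ s, h < t.height := by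
  by_contra hc
  push_neg at hc
  exact hs ((finite_height_lt (h + 1)).subset (fun t ht => Nat.lt_succ_of_le (hc t ht)))

end AuxLemmas

/-- let `A` be a 1-or-(|S|+1) DTA, `h ≥ |Q| + height(s)`,
`s ∈ T_Σ(V−W)` determined at all non-variable positions of terms in `S` and
structurally subsumed by all terms in `S`. If `⟨{s},R⟩` has an instance not in
`L(⟨S,R⟩)` and `x` occurs at least twice in `s` with `L(A,C(x))` infinite, then
there are infinitely many instances of `s` not in `L(⟨S,R⟩)`, pairwise
different on `x`. -/
theorem infinitely_many_instances {F V Q : Type} {ar : F → ℕ}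
    [Fintype F] [Fintype Q] [Fintype V]
    (R : RRC F ar V Q) (S : Finset (Term F ar V)) (s : Term F ar V)
    (h1 : R.A.OneOr (S.card + 1))
    (hh : Fintype.card Q + s.height ≤ R.hgt)
    (hdet : ∀ t ∈ S, ∀ p : List ℕ, Term.isNonVarPos t p → s.determinedAt p)
    (hsub : ∀ t ∈ S, StructSub R.A R.C s t)
    (hW : ∀ x : V, s.varOccurs x → x ∉ R.W)
    (hex : ∃ u : GTerm F ar, u ∈ R.lang {s} ∧ u ∉ R.lang ↑S)
    (x : V) (hx : s.occursTwice x) (hxinf : (R.A.lang (R.C x)).Infinite) :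
    ∃ φs : ℕ → (V → GTerm F ar),
      (∀ i, R.IsSolution (φs i)) ∧
      (∀ i, s.subst (φs i) ∉ R.lang ↑S) ∧
      (∀ i j, i ≠ j → φs i x ≠ φs j x) := by
  classical
  obtain ⟨u, hu1, hu2⟩ := hex
  obtain ⟨s₀, hs₀, φ₀, hφ₀, hu⟩ := hu1
  rw [Set.mem_singleton_iff] at hs₀
  rw [hs₀] at hu
  subst hu
  have hxocc : s.varOccurs x := by
    obtain ⟨p, _, _, hp, _⟩ := hx
    exact ⟨p, hp⟩
  have hxW : x ∉ R.W := hW x hxocc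
  -- main claim: infinitely many t give instances outside L(S,R)
  have key : {t : GTerm F ar | t ∈ R.A.lang (R.C x) ∧
      s.subst (Function.update φ₀ x t) ∉ R.lang ↑S}.Infinite := by
    by_contra hfin
    rw [Set.not_infinite] at hfin
    set B := R.A.lang (R.C x) \ {t : GTerm F ar | t ∈ R.A.lang (R.C x) ∧
      s.subst (Function.update φ₀ x t) ∉ R.lang ↑S} with hBdef
    have hB : B.Infinite := hxinf.diff hfin
    have hwit : ∀ t ∈ B, ∃ t' ∈ S, ∃ ψ, R.IsSolution ψ ∧
        s.subst (Function.update φ₀ x t) = t'.subst ψ := by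
      intro t ht
      have hmem : s.subst (Function.update φ₀ x t) ∈ R.lang ↑S := by
        by_contra hnot
        exact ht.2 ⟨ht.1, hnot⟩
      obtain ⟨t', ht', ψ, hψ, heq⟩ := hmem
      exact ⟨t', ht', ψ, hψ, heq⟩
    -- pigeonhole: one witness term t' ∈ S used for infinitely many t
    set w : GTerm F ar → Term F ar V := fun t =>
      if h : ∃ t' ∈ S, ∃ ψ, R.IsSolution ψ ∧
          s.subst (Function.update φ₀ x t) = t'.subst ψ then h.choose else s with hwdef
    have hfib : ∃ t' ∈ S, {t ∈ B | w t = t'}.Infinite := by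
      by_contra hnf
      push_neg at hnf
      have hsubU : B ⊆ ⋃ t' ∈ S, {t ∈ B | w t = t'} := by
        intro t ht
        have h := hwit t ht
        have hw : w t = h.choose := dif_pos h
        exact Set.mem_biUnion h.choose_spec.1 ⟨ht, hw⟩
      refine hB (Set.Finite.subset ?_ hsubU)
      exact Set.Finite.biUnion S.finite_toSet
        (fun t' ht' => (hnf t' ht'))
    obtain ⟨t', ht'S, hB'⟩ := hfib
    have hwit' : ∀ t ∈ {t ∈ B | w t = t'}, ∃ ψ, R.IsSolution ψ ∧
        s.subst (Function.update φ₀ x t) = t'.subst ψ := by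
      intro t ht
      have h := hwit t ht.1
      have hw : w t = h.choose := dif_pos h
      obtain ⟨ψ, hψ, heq⟩ := h.choose_spec.2
      exact ⟨ψ, hψ, by rw [heq, ← hw, ht.2]⟩
    have hS := hsub t' ht'S
    -- F4: variables of t' in W sit above no occurrence of x in s
    have hWsafe : ∀ (p : List ℕ) (y : V), t'.sub p = some (Term.var y) → y ∈ R.W →
        ∀ sp, s.sub p = some sp → ¬ sp.varOccurs x := by
      intro p y hp hyW sp hsp hocc
      obtain ⟨tb, htbB', htb⟩ := exists_height_gt hB' R.hgt
      obtain ⟨ψ, hψ, heq⟩ := hwit' tb htbB'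
      have e1 : (t'.subst ψ).sub p = some (ψ y) := subst_sub ψ p t' _ hp
      have e2 : (s.subst (Function.update φ₀ x tb)).sub p =
          some (sp.subst (Function.update φ₀ x tb)) := subst_sub _ p s _ hsp
      rw [heq, e1] at e2
      have hψy : ψ y = sp.subst (Function.update φ₀ x tb) := Option.some.inj e2
      obtain ⟨q, hq⟩ := hocc
      have e3 := subst_sub (Function.update φ₀ x tb) q sp _ hq
      have e4 : Term.subst (Function.update φ₀ x tb) (Term.var x) = tb := by
        simp [Term.subst]
      rw [e4] at e3
      have hle := sub_height_le q _ _ e3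
      have hh2 := hψ.2 y hyW
      rw [hψy] at hh2
      omega
    -- the canonical substitution χ mapping vars of t' to subterms of s
    set χ : V → Term F ar V := fun y =>
      if hy : ∃ p, t'.sub p = some (Term.var y) then
        (hS.2 hy.choose (Term.var y) hy.choose_spec).choose else Term.var y with hχdef
    have hχ1 : ∀ y (hy : t'.varOccurs y), s.sub hy.choose = some (χ y) ∧
        R.A.runC R.C (Term.var y) = R.A.runC R.C (χ y) := by
      intro y hy
      have hc : χ y = (hS.2 hy.choose (Term.var y) hy.choose_spec).choose := dif_pos hy
      rw [hc]
      exact (hS.2 hy.choose (Term.var y) hy.choose_spec).choose_spec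
    have hforced : ∀ (φ ψ : V → GTerm F ar), s.subst φ = t'.subst ψ →
        ∀ y (hy : t'.varOccurs y), ψ y = (χ y).subst φ := by
      intro φ ψ heq y hy
      have e1 : (t'.subst ψ).sub hy.choose = some (ψ y) :=
        subst_sub ψ hy.choose t' _ hy.choose_spec
      have e2 : (s.subst φ).sub hy.choose = some ((χ y).subst φ) :=
        subst_sub φ _ s _ (hχ1 y hy).1
      rw [heq, e1] at e2
      exact Option.some.inj e2
    have hs' : ∀ t ∈ {t ∈ B | w t = t'},
        s.subst (Function.update φ₀ x t) = (t'.subst χ).subst (Function.update φ₀ x t) := by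
      intro t ht
      obtain ⟨ψ, hψ, heq⟩ := hwit' t ht
      rw [heq, subst_subst]
      exact subst_congr t' (fun y hy => hforced _ ψ heq y hy)
    obtain ⟨t₁, ht₁, t₂, ht₂, hne⟩ := hB'.nontrivial
    have h2pt := two_point (σ := φ₀) hne s (t'.subst χ) (hs' t₁ ht₁) (hs' t₂ ht₂) (φ₀ x)
    rw [Function.update_eq_self] at h2pt
    -- h2pt : s.subst φ₀ = (t'.subst χ).subst φ₀
    obtain ⟨ψ₁, hψ₁, heq₁⟩ := hwit' t₁ ht₁
    set ψ₀ : V → GTerm F ar := fun y =>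
      if hy : t'.varOccurs y then (χ y).subst φ₀ else ψ₁ y with hψ₀def
    have hfinal : s.subst φ₀ ∈ R.lang ↑S := by
      refine ⟨t', ht'S, ψ₀, ⟨?_, ?_⟩, ?_⟩
      · intro y
        by_cases hy : t'.varOccurs y
        · have hc : ψ₀ y = (χ y).subst φ₀ := dif_pos hy
          rw [hc, run_subst R.A R.C φ₀ hφ₀.1 (χ y), ← (hχ1 y hy).2]
          rfl
        · have hc : ψ₀ y = ψ₁ y := dif_neg hy
          rw [hc]
          exact hψ₁.1 y
      · intro y hyW
        by_cases hy : t'.varOccurs y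
        · have hc : ψ₀ y = (χ y).subst φ₀ := dif_pos hy
          rw [hc]
          have hnocc : ¬ (χ y).varOccurs x :=
            hWsafe hy.choose y hy.choose_spec hyW (χ y) (hχ1 y hy).1
          have hswap : (χ y).subst φ₀ = (χ y).subst (Function.update φ₀ x t₁) := by
            conv_lhs => rw [← Function.update_eq_self x φ₀]
            exact not_occurs_subst (σ := φ₀) (φ₀ x) t₁ hnocc
          rw [hswap, ← hforced _ ψ₁ heq₁ y hy]
          exact hψ₁.2 y hyW
        · have hc : ψ₀ y = ψ₁ y := dif_neg hy
          rw [hc]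
          exact hψ₁.2 y hyW
      · rw [h2pt, subst_subst]
        exact (subst_congr t' (fun y hy => (dif_pos hy : ψ₀ y = _))).symm
    exact hu2 hfinal
  -- build the sequence from the infinite set
  let e := key.natEmbedding
  refine ⟨fun i => Function.update φ₀ x (e i), ?_, ?_, ?_⟩
  · intro i
    refine ⟨fun y => ?_, fun y hy => ?_⟩
    · dsimp only
      by_cases hyx : y = x
      · rw [hyx, Function.update_self]
        exact (e i).2.1
      · rw [Function.update_of_ne hyx]
        exact hφ₀.1 y
    · dsimp only
      have hyx : y ≠ x := fun h => hxW (h ▸ hy)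
      rw [Function.update_of_ne hyx]
      exact hφ₀.2 y hy
  · intro i
    exact (e i).2.2
  · intro i j hij
    dsimp only
    rw [Function.update_self, Function.update_self]
    exact fun h => hij (e.injective (Subtype.ext h))

end RITRC
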